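/- For all countable ordinals α and γ with α < γ, and every finite type σ over Ω, Iter_α^σ ≤hp Iter_γ^σ. -/

import Mathlib

/-!  Framework: finite type structure over Ω = countable ordinals,
     limsup/liminf, transfinite iteration functionals, hereditarily
     positive and hereditarily monotone functionals. -/

noncomputable section
namespace IterOrd

open Ordinal

theorem omega1_pos : (0 : Ordinal) < ω₁ := Ordinal.omega0_pos.trans Ordinal.omega0_lt_omega_one

/-- `Om` is Ω, the set of countable ordinals (ordinals `< ω₁`). -/
abbrev Om : Type 1 := {o : Ordinal // o < ω₁}

/-- Infimum of a subset of Ω (the minimum for nonempty sets; `0` for `∅`). -/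
def infOm (s : Set Om) : Om :=
  ⟨sInf (Subtype.val '' s), by
    rcases (Subtype.val '' s).eq_empty_or_nonempty with h | h
    · rw [h]; simpa using omega1_pos
    · obtain ⟨x, _, he⟩ := csInf_mem h
      exact he ▸ x.2⟩

/-- Supremum of a subset of Ω.  Whenever the supremum of the set exists in Ω
(in particular for every countable subset, by regularity of `ω₁`) this is the
genuine supremum; otherwise it takes a junk value. -/
def supOm (s : Set Om) : Om :=
  if h : sSup (Subtype.val '' s) < ω₁ then ⟨sSup (Subtype.val '' s), h⟩ else ⟨0, omega1_pos⟩

/-- Finite types over the base type `o` (interpreted as Ω). -/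
inductive Ty : Type
  | base : Ty
  | arrow : Ty → Ty → Ty
deriving DecidableEq

/-- The full type structure over Ω: `El base = Ω` and
`El (arrow σ τ)` is the set of all functions `El σ → El τ`. -/
@[reducible] def El : Ty → Type 1
  | .base => Om
  | .arrow σ τ => El σ → El τ

/-- The order on each `El σ`: the ordinal order at base type, pointwise at arrow types. -/
def Le : (σ : Ty) → El σ → El σ → Prop
  | .base => fun x y => x ≤ y
  | .arrow σ τ => fun f g => ∀ x : El σ, Le τ (f x) (g x)

/-- Suprema, computed pointwise at function types. -/
def supEl : (σ : Ty) → Set (El σ) → El σ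
  | .base => supOm
  | .arrow σ τ => fun S (x : El σ) => supEl τ ((fun f : El (.arrow σ τ) => f x) '' S)

/-- Infima, computed pointwise at function types. -/
def infEl : (σ : Ty) → Set (El σ) → El σ
  | .base => infOm
  | .arrow σ τ => fun S (x : El σ) => infEl τ ((fun f : El (.arrow σ τ) => f x) '' S)

/-- `limsup_{ξ→ζ} f ξ = inf_{γ<ζ} sup_{γ≤ξ<ζ} f ξ`. -/
def limsupEl (σ : Ty) (ζ : Ordinal) (f : ∀ ξ : Ordinal, ξ < ζ → El σ) : El σ :=
  infEl σ {y | ∃ γ, ∃ _ : γ < ζ, y = supEl σ {z | ∃ ξ, ∃ h : ξ < ζ, γ ≤ ξ ∧ z = f ξ h}}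

/-- `liminf_{ξ→ζ} f ξ = sup_{γ<ζ} inf_{γ≤ξ<ζ} f ξ`. -/
def liminfEl (σ : Ty) (ζ : Ordinal) (f : ∀ ξ : Ordinal, ξ < ζ → El σ) : El σ :=
  supEl σ {y | ∃ γ, ∃ _ : γ < ζ, y = infEl σ {z | ∃ ξ, ∃ h : ξ < ζ, γ ≤ ξ ∧ z = f ξ h}}

/-- `limsup` of a ζ-indexed sequence of ordinals. -/
def oLimsup (ζ : Ordinal) (a : Ordinal → Ordinal) : Ordinal :=
  sInf {s | ∃ γ, γ < ζ ∧ s = sSup (a '' {ξ | γ ≤ ξ ∧ ξ < ζ})}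

/-- `liminf` of a ζ-indexed sequence of ordinals. -/
def oLiminf (ζ : Ordinal) (a : Ordinal → Ordinal) : Ordinal :=
  sSup {s | ∃ γ, γ < ζ ∧ s = sInf (a '' {ξ | γ ≤ ξ ∧ ξ < ζ})}

/-- The α-iteration functional of type σ:
`Iter 0 f x = x`, `Iter (α+1) f x = f (Iter α f x)`, and
`Iter μ f x = limsup_{ξ→μ} Iter ξ f x` for limit μ. -/
def Iter (σ : Ty) (α : Ordinal) : (El σ → El σ) → El σ → El σ :=
  Ordinal.limitRecOn (motive := fun _ => (El σ → El σ) → El σ → El σ) α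
    (fun _ x => x)
    (fun _ ih f x => f (ih f x))
    (fun μ _ ih f x => limsupEl σ μ (fun ξ h => ih ξ h f x))

/-- The pair (hereditarily positive, ≤hp), defined simultaneously by recursion on the type.
Every element of `Ω` and of `Ω_{ρ→τ}` with `ρ ≠ τ` is h.p., and `≤hp` there is `≤`;
`f : Ω_{τ→τ}` is h.p. iff it preserves h.p., is inflationary on h.p. arguments and is
monotone (w.r.t. `≤hp`) on h.p. arguments; `f ≤hp f'` on `Ω_{τ→τ}` iff `f x ≤hp f' x`
for every h.p. `x`. -/
def HPaux : (σ : Ty) → (El σ → Prop) × (El σ → El σ → Prop)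
  | .base => ⟨fun _ => True, fun x y => x ≤ y⟩
  | .arrow ρ τ =>
      ⟨fun f =>
        if h : ρ = τ then
          (∀ x, (HPaux ρ).1 x → (HPaux τ).1 (f x)) ∧
          (∀ x, (HPaux ρ).1 x → (HPaux τ).2 (cast (congrArg El h) x) (f x)) ∧
          (∀ x y, (HPaux ρ).1 x → (HPaux ρ).1 y → (HPaux ρ).2 x y → (HPaux τ).2 (f x) (f y))
        else True,
       fun f g =>
        if ρ = τ then ∀ x, (HPaux ρ).1 x → (HPaux τ).2 (f x) (g x)
        else Le (.arrow ρ τ) f g⟩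

/-- Hereditarily positive functionals. -/
def Hp (σ : Ty) : El σ → Prop := (HPaux σ).1

/-- The order `≤hp`. -/
def HpLe (σ : Ty) : El σ → El σ → Prop := (HPaux σ).2

/-- `f =hp g` iff `f ≤hp g` and `g ≤hp f`. -/
def HpEq (σ : Ty) (f g : El σ) : Prop := HpLe σ f g ∧ HpLe σ g f

/-- The pair (hereditarily monotone, ≤ on the hereditarily monotone structure),
by recursion on the type.  `f` is hereditarily monotone iff it maps hereditarily
monotone arguments to hereditarily monotone values, monotonically; the order is
pointwise over hereditarily monotone arguments (i.e. the order of `Ω^mon`). -/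
def HMaux : (σ : Ty) → (El σ → Prop) × (El σ → El σ → Prop)
  | .base => ⟨fun _ => True, fun x y => x ≤ y⟩
  | .arrow σ τ =>
      ⟨fun f =>
        (∀ x, (HMaux σ).1 x → (HMaux τ).1 (f x)) ∧
        (∀ x y, (HMaux σ).1 x → (HMaux σ).1 y → (HMaux σ).2 x y → (HMaux τ).2 (f x) (f y)),
       fun f g => ∀ x, (HMaux σ).1 x → (HMaux τ).2 (f x) (g x)⟩

/-- Hereditarily monotone functionals: the members of the type structure `Ω^mon`. -/
def HM (σ : Ty) : El σ → Prop := (HMaux σ).1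

/-- The (pointwise) order of the hereditarily monotone type structure `Ω^mon`. -/
def LeHM (σ : Ty) : El σ → El σ → Prop := (HMaux σ).2

/-- Equality in the hereditarily monotone type structure `Ω^mon`. -/
def EqHM (σ : Ty) (f g : El σ) : Prop := LeHM σ f g ∧ LeHM σ g f

/-! ### Auxiliary lemmas -/

section Aux

open Set

universe u

lemma sSup_lt_omega1 {s : Set Ordinal.{u}} (hc : s.Countable) (hb : ∀ x ∈ s, x < ω₁) :
    sSup s < ω₁ := by
  rcases s.eq_empty_or_nonempty with rfl | hne
  · simpa using omega1_pos
  · obtain ⟨g, rfl⟩ := hc.exists_eq_range hne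
    show iSup g < ω₁
    rw [← Cardinal.ord_aleph 1]
    refine Ordinal.iSup_lt_ord_lift ?_ fun i => ?_
    · rw [Cardinal.isRegular_aleph_one.cof_eq]
      simpa using lt_of_le_of_lt Cardinal.mk_le_aleph0 Cardinal.aleph0_lt_aleph_one
    · rw [Cardinal.ord_aleph 1]; exact hb _ ⟨i, rfl⟩

lemma countable_Iio_ord {γ : Ordinal.{u}} (h : γ < ω₁) : (Set.Iio γ).Countable := by
  have h1 : γ.card < Cardinal.aleph 1 := Cardinal.lt_ord.mp (by rwa [Cardinal.ord_aleph])
  have h2 : γ.card ≤ Cardinal.aleph0 := by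
    rwa [← Cardinal.succ_aleph0, Order.lt_succ_iff] at h1
  rw [← Cardinal.le_aleph0_iff_set_countable, Ordinal.mk_Iio_ordinal,
    ← Cardinal.lift_aleph0.{u + 1, u}, Cardinal.lift_le]
  exact h2

/-! Basic facts about `supOm` / `infOm`. -/

lemma le_supOm {S : Set Om} (hc : S.Countable) {x : Om} (hx : x ∈ S) : x ≤ supOm S := by
  have hlt : sSup (Subtype.val '' S) < ω₁ :=
    sSup_lt_omega1 (hc.image _) (fun a ha => by obtain ⟨y, -, rfl⟩ := ha; exact y.2)
  rw [supOm, dif_pos hlt]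
  exact Subtype.coe_le_coe.mp
    (le_csSup ⟨ω₁, fun a ha => by obtain ⟨y, -, rfl⟩ := ha; exact y.2.le⟩
      (Set.mem_image_of_mem _ hx))

lemma supOm_le {S : Set Om} {b : Om} (h : ∀ y ∈ S, y ≤ b) : supOm S ≤ b := by
  rw [supOm]
  split
  · exact Subtype.coe_le_coe.mp
      (csSup_le' (fun a ha => by obtain ⟨y, hy, rfl⟩ := ha; exact h y hy))
  · exact Subtype.coe_le_coe.mp (zero_le (a := (_ : Ordinal)))

lemma infOm_le {S : Set Om} {x : Om} (hx : x ∈ S) : infOm S ≤ x :=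
  Subtype.coe_le_coe.mp (csInf_le (OrderBot.bddBelow _) (Set.mem_image_of_mem _ hx))

lemma le_infOm {S : Set Om} {b : Om} (hne : S.Nonempty) (h : ∀ y ∈ S, b ≤ y) :
    b ≤ infOm S :=
  Subtype.coe_le_coe.mp
    (le_csInf (hne.image _) (fun a ha => by obtain ⟨y, hy, rfl⟩ := ha; exact h y hy))

/-! Basic facts about `Le`. -/

lemma Le.refl : ∀ (σ : Ty) (x : El σ), Le σ x x
  | .base, _ => le_rfl
  | .arrow _ τ, f => fun x => Le.refl τ (f x)

lemma Le.trans : ∀ {σ : Ty} {x y z : El σ}, Le σ x y → Le σ y z → Le σ x z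
  | .base, _, _, _, h1, h2 => le_trans h1 h2
  | .arrow _ τ, _, _, _, h1, h2 => fun x => Le.trans (σ := τ) (h1 x) (h2 x)

lemma le_supEl : ∀ {σ : Ty} {S : Set (El σ)}, S.Countable → ∀ {x : El σ}, x ∈ S →
    Le σ x (supEl σ S)
  | .base, _, hc, _, hx => le_supOm hc hx
  | .arrow _ τ, _, hc, _, hx => fun _ =>
      le_supEl (σ := τ) (hc.image _) (Set.mem_image_of_mem _ hx)

lemma supEl_le : ∀ {σ : Ty} {S : Set (El σ)} {b : El σ}, (∀ y ∈ S, Le σ y b) →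
    Le σ (supEl σ S) b
  | .base, _, _, h => supOm_le h
  | .arrow _ τ, _, _, h => fun a =>
      supEl_le (σ := τ) (fun z hz => by obtain ⟨g, hg, rfl⟩ := hz; exact h g hg a)

lemma infEl_le : ∀ {σ : Ty} {S : Set (El σ)} {x : El σ}, x ∈ S → Le σ (infEl σ S) x
  | .base, _, _, hx => infOm_le hx
  | .arrow _ τ, _, _, hx => fun _ => infEl_le (σ := τ) (Set.mem_image_of_mem _ hx)

lemma le_infEl : ∀ {σ : Ty} {S : Set (El σ)} {b : El σ}, S.Nonempty →
    (∀ y ∈ S, Le σ b y) → Le σ b (infEl σ S)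
  | .base, _, _, hne, h => le_infOm hne h
  | .arrow _ τ, _, _, hne, h => fun a =>
      le_infEl (σ := τ) (hne.image _)
        (fun z hz => by obtain ⟨g, hg, rfl⟩ := hz; exact h g hg a)

/-! Characterizations of `Hp` and `HpLe` at arrow types. -/

lemma hp_arrow_ne {ρ τ : Ty} (h : ρ ≠ τ) (f : El (.arrow ρ τ)) : Hp (.arrow ρ τ) f := by
  simp [Hp, HPaux, h]

lemma hpLe_arrow_ne {ρ τ : Ty} (h : ρ ≠ τ) {f g : El (.arrow ρ τ)} :
    HpLe (.arrow ρ τ) f g ↔ Le (.arrow ρ τ) f g := by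
  simp [HpLe, HPaux, h]

lemma hpLe_arrow_self {τ : Ty} {f g : El (.arrow τ τ)} :
    HpLe (.arrow τ τ) f g ↔ ∀ x, Hp τ x → HpLe τ (f x) (g x) := by
  simp [HpLe, HPaux, Hp]

lemma hp_arrow_self {τ : Ty} {f : El (.arrow τ τ)} :
    Hp (.arrow τ τ) f ↔
      (∀ x, Hp τ x → Hp τ (f x)) ∧ (∀ x, Hp τ x → HpLe τ x (f x)) ∧
      (∀ x y, Hp τ x → Hp τ y → HpLe τ x y → HpLe τ (f x) (f y)) := by
  simp [Hp, HPaux, HpLe]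

/-! Basic facts about `HpLe`. -/

lemma le_to_hpLe : ∀ {σ : Ty} {x y : El σ}, Le σ x y → HpLe σ x y := by
  intro σ
  induction σ with
  | base => exact fun h => h
  | arrow ρ τ ihρ ihτ =>
    intro f g h
    by_cases hρτ : ρ = τ
    · subst hρτ
      exact hpLe_arrow_self.mpr (fun x _ => ihτ (h x))
    · exact (hpLe_arrow_ne hρτ).mpr h

lemma hpLe_refl {σ : Ty} (x : El σ) : HpLe σ x x := le_to_hpLe (Le.refl σ x)

lemma hpLe_trans : ∀ {σ : Ty} {x y z : El σ}, HpLe σ x y → HpLe σ y z → HpLe σ x z := by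
  intro σ
  induction σ with
  | base => exact fun h1 h2 => le_trans h1 h2
  | arrow ρ τ ihρ ihτ =>
    intro f g k h1 h2
    by_cases hρτ : ρ = τ
    · subst hρτ
      rw [hpLe_arrow_self] at h1 h2 ⊢
      exact fun x hx => ihτ (h1 x hx) (h2 x hx)
    · rw [hpLe_arrow_ne hρτ] at h1 h2 ⊢
      exact Le.trans h1 h2

lemma hpLe_infEl : ∀ {σ : Ty} {S : Set (El σ)} {b : El σ}, S.Nonempty →
    (∀ y ∈ S, HpLe σ b y) → HpLe σ b (infEl σ S) := by
  intro σ
  induction σ with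
  | base => exact fun hne h => le_infOm hne h
  | arrow ρ τ ihρ ihτ =>
    intro S b hne h
    by_cases hρτ : ρ = τ
    · subst hρτ
      rw [hpLe_arrow_self]
      intro x hx
      refine ihτ (hne.image _) ?_
      rintro z ⟨g, hg, rfl⟩
      exact (hpLe_arrow_self.mp (h g hg)) x hx
    · rw [hpLe_arrow_ne hρτ]
      refine le_infEl hne (fun y hy => ?_)
      exact (hpLe_arrow_ne hρτ).mp (h y hy)

lemma supEl_hpLe : ∀ {σ : Ty} {S : Set (El σ)} {b : El σ},
    (∀ y ∈ S, HpLe σ y b) → HpLe σ (supEl σ S) b := by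
  intro σ
  induction σ with
  | base => exact fun h => supOm_le h
  | arrow ρ τ ihρ ihτ =>
    intro S b h
    by_cases hρτ : ρ = τ
    · subst hρτ
      rw [hpLe_arrow_self]
      intro x hx
      refine ihτ ?_
      rintro z ⟨g, hg, rfl⟩
      exact (hpLe_arrow_self.mp (h g hg)) x hx
    · rw [hpLe_arrow_ne hρτ]
      refine supEl_le (fun y hy => ?_)
      exact (hpLe_arrow_ne hρτ).mp (h y hy)

/-! `Hp` is preserved by infima and countable suprema. -/

lemma hp_infEl : ∀ {σ : Ty} {S : Set (El σ)}, S.Nonempty → (∀ y ∈ S, Hp σ y) →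
    Hp σ (infEl σ S) := by
  intro σ
  induction σ with
  | base => exact fun _ _ => trivial
  | arrow ρ τ ihρ ihτ =>
    intro S hne h
    by_cases hρτ : ρ = τ
    · subst hρτ
      rw [hp_arrow_self]
      refine ⟨fun x hx => ?_, fun x hx => ?_, fun x y hx hy hxy => ?_⟩
      · refine ihτ (hne.image _) ?_
        rintro z ⟨g, hg, rfl⟩
        exact (hp_arrow_self.mp (h g hg)).1 x hx
      · refine hpLe_infEl (hne.image _) ?_
        rintro z ⟨g, hg, rfl⟩
        exact (hp_arrow_self.mp (h g hg)).2.1 x hx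
      · refine hpLe_infEl (hne.image _) ?_
        rintro z ⟨g, hg, rfl⟩
        refine hpLe_trans (le_to_hpLe (infEl_le (Set.mem_image_of_mem _ hg))) ?_
        exact (hp_arrow_self.mp (h g hg)).2.2 x y hx hy hxy
    · exact hp_arrow_ne hρτ _

lemma hp_supEl : ∀ {σ : Ty} {S : Set (El σ)}, S.Countable → S.Nonempty →
    (∀ y ∈ S, Hp σ y) → Hp σ (supEl σ S) := by
  intro σ
  induction σ with
  | base => exact fun _ _ _ => trivial
  | arrow ρ τ ihρ ihτ =>
    intro S hc hne h
    by_cases hρτ : ρ = τ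
    · subst hρτ
      rw [hp_arrow_self]
      refine ⟨fun x hx => ?_, fun x hx => ?_, fun x y hx hy hxy => ?_⟩
      · refine ihτ (hc.image _) (hne.image _) ?_
        rintro z ⟨g, hg, rfl⟩
        exact (hp_arrow_self.mp (h g hg)).1 x hx
      · obtain ⟨g, hg⟩ := hne
        refine hpLe_trans ((hp_arrow_self.mp (h g hg)).2.1 x hx) ?_
        exact le_to_hpLe (le_supEl (hc.image _) (Set.mem_image_of_mem _ hg))
      · refine supEl_hpLe ?_
        rintro z ⟨g, hg, rfl⟩
        refine hpLe_trans ((hp_arrow_self.mp (h g hg)).2.2 x y hx hy hxy) ?_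
        exact le_to_hpLe (le_supEl (hc.image _) (Set.mem_image_of_mem _ hg))
    · exact hp_arrow_ne hρτ _

/-! Unfolding `Iter`. -/

lemma Iter_zero (σ : Ty) (f : El σ → El σ) (x : El σ) : Iter σ 0 f x = x := by
  rw [Iter, Ordinal.limitRecOn_zero]

lemma Iter_succ (σ : Ty) (α : Ordinal) (f : El σ → El σ) (x : El σ) :
    Iter σ (α + 1) f x = f (Iter σ α f x) := by
  rw [Iter, Ordinal.add_one_eq_succ, Ordinal.limitRecOn_succ]; rfl

lemma Iter_limit (σ : Ty) (μ : Ordinal) (hμ : Order.IsSuccLimit μ) (f : El σ → El σ) (x : El σ) :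
    Iter σ μ f x = limsupEl σ μ (fun ξ _ => Iter σ ξ f x) := by
  rw [Iter, Ordinal.limitRecOn_limit _ _ _ _ hμ]; rfl

/-! Countability / nonemptiness of the sets occurring in `limsupEl`. -/

lemma countable_iterSet {σ : Ty} {μ : Ordinal} (hμ : μ < ω₁) (γ' : Ordinal)
    (f : El σ → El σ) (x : El σ) :
    {z | ∃ ξ, ∃ _ : ξ < μ, γ' ≤ ξ ∧ z = Iter σ ξ f x}.Countable := by
  have : Countable (Set.Iio μ) := (countable_Iio_ord hμ).to_subtype
  refine (Set.countable_range (fun p : Set.Iio μ => Iter σ p.1 f x)).mono ?_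
  rintro z ⟨ξ, hξ, -, rfl⟩
  exact ⟨⟨ξ, hξ⟩, rfl⟩

lemma countable_limsupSet {σ : Ty} {μ : Ordinal} (hμ : μ < ω₁)
    (f : El σ → El σ) (x : El σ) :
    {y | ∃ γ', ∃ _ : γ' < μ, y = supEl σ {z | ∃ ξ, ∃ _ : ξ < μ, γ' ≤ ξ ∧ z = Iter σ ξ f x}}.Countable := by
  have : Countable (Set.Iio μ) := (countable_Iio_ord hμ).to_subtype
  refine (Set.countable_range (fun p : Set.Iio μ =>
    supEl σ {z | ∃ ξ, ∃ _ : ξ < μ, p.1 ≤ ξ ∧ z = Iter σ ξ f x})).mono ?_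
  rintro y ⟨γ', hγ', rfl⟩
  exact ⟨⟨γ', hγ'⟩, rfl⟩

/-! Core facts about `Iter`. -/

lemma hp_iter {σ : Ty} (f : El σ → El σ) (hf : Hp (.arrow σ σ) f) {x : El σ} (hx : Hp σ x) :
    ∀ α : Ordinal, α < ω₁ → Hp σ (Iter σ α f x) := by
  intro α
  induction α using Ordinal.induction with
  | h α ih =>
    intro hα
    rcases Ordinal.zero_or_succ_or_isSuccLimit α with rfl | ⟨β, rfl⟩ | hlim
    · rw [Iter_zero]; exact hx
    · rw [← Ordinal.add_one_eq_succ, Iter_succ]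
      refine (hp_arrow_self.mp hf).1 _ ?_
      exact ih β (Order.lt_succ β) ((Order.lt_succ β).trans hα)
    · rw [Iter_limit σ α hlim, limsupEl]
      refine hp_infEl ⟨_, 0, hlim.pos, rfl⟩ ?_
      rintro y ⟨γ', hγ', rfl⟩
      refine hp_supEl (countable_iterSet hα γ' f x) ⟨_, γ', hγ', le_rfl, rfl⟩ ?_
      rintro z ⟨ξ, hξ, -, rfl⟩
      exact ih ξ hξ (hξ.trans hα)

lemma iter_mono {σ : Ty} (f : El σ → El σ) (hf : Hp (.arrow σ σ) f) {x : El σ} (hx : Hp σ x) :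
    ∀ γ : Ordinal, γ < ω₁ → ∀ α ≤ γ, HpLe σ (Iter σ α f x) (Iter σ γ f x) := by
  intro γ
  induction γ using Ordinal.induction with
  | h γ ih =>
    intro hγ α hαγ
    rcases eq_or_lt_of_le hαγ with rfl | hαγ
    · exact hpLe_refl _
    rcases Ordinal.zero_or_succ_or_isSuccLimit γ with rfl | ⟨β, rfl⟩ | hlim
    · exact absurd hαγ ((zero_le (a := α)).not_gt)
    · rw [← Ordinal.add_one_eq_succ, Iter_succ]
      have hβ1 : β < Order.succ β := Order.lt_succ β
      have hβω : β < ω₁ := hβ1.trans hγ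
      have hαβ : α ≤ β := Order.lt_succ_iff.mp hαγ
      refine hpLe_trans (ih β hβ1 hβω α hαβ) ?_
      exact (hp_arrow_self.mp hf).2.1 _ (hp_iter f hf hx β hβω)
    · rw [Iter_limit σ γ hlim, limsupEl]
      refine hpLe_infEl ⟨_, 0, hlim.pos, rfl⟩ ?_
      rintro y ⟨γ', hγ', rfl⟩
      have hξμ : max α γ' < γ := max_lt hαγ hγ'
      have hmem : Iter σ (max α γ') f x ∈
          {z | ∃ ξ, ∃ _ : ξ < γ, γ' ≤ ξ ∧ z = Iter σ ξ f x} :=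
        ⟨max α γ', hξμ, le_max_right _ _, rfl⟩
      refine hpLe_trans (ih (max α γ') hξμ (hξμ.trans hγ) α (le_max_left _ _)) ?_
      exact le_to_hpLe (le_supEl (countable_iterSet hγ γ' f x) hmem)

end Aux

/-- For countable ordinals `α < γ` and every finite type `σ`,
`Iter_α^σ ≤hp Iter_γ^σ`. -/
theorem iter_hpLe_iter (α γ : Ordinal) (h : α < γ) (hγ : γ < ω₁) (σ : Ty) :
    HpLe (.arrow (.arrow σ σ) (.arrow σ σ)) (Iter σ α) (Iter σ γ) := by
  refine hpLe_arrow_self.mpr (fun f hf => ?_)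
  refine hpLe_arrow_self.mpr (fun x hx => ?_)
  exact iter_mono f hf hx γ hγ α h.le

end IterOrd
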